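/- Let G be an infinite non-abelian 2-group (every element has order a power of 2) with a unique element of order 2, denoted −1 (so orderOf (−1) = 2). Let A be a maximal abelian subgroup of G and let x ∈ G with x ∉ A and x² ∈ A. Then x² = −1. -/

import Mathlib

private lemma ordsq {G : Type*} [Group G] (w : G) (n : ℕ)
    (h : orderOf w = 2 ^ (n + 1)) : orderOf (w ^ 2 ^ n) = 2 := by
  haveI : Fact (Nat.Prime 2) := ⟨Nat.prime_two⟩
  have hp : (w ^ 2 ^ n) ^ 2 = 1 := by
    rw [← pow_mul, ← pow_succ, ← h]; exact pow_orderOf_eq_one w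
  refine orderOf_eq_prime hp ?_
  intro h1
  have hd := orderOf_dvd_of_pow_eq_one h1
  rw [h] at hd
  have h2 : (2 : ℕ) ^ (n + 1) ≤ 2 ^ n := Nat.le_of_dvd (by positivity) hd
  have h3 : (2 : ℕ) ^ n < 2 ^ (n + 1) := Nat.pow_lt_pow_right one_lt_two (Nat.lt_succ_self n)
  omega

/-- In an infinite non-abelian 2-group `G` whose unique element of order 2 is `t`
(playing the role of `-1`), if `A` is a maximal abelian subgroup and `x ∉ A` satisfies
`x² ∈ A`, then `x² = t`. -/
theorem stmt_9 (G : Type*) [Group G] [Infinite G] (hG : IsPGroup 2 G)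
    (hna : ∃ x y : G, x * y ≠ y * x)
    (t : G) (ht : orderOf t = 2) (htu : ∀ s : G, orderOf s = 2 → s = t)
    (A : Subgroup G) (hA : IsMulCommutative A)
    (hmax : ∀ B : Subgroup G, IsMulCommutative B → A ≤ B → B = A)
    (x : G) (hx : x ∉ A) (hx2 : x ^ 2 ∈ A) :
    x ^ 2 = t := by
  classical
  haveI : Fact (Nat.Prime 2) := ⟨Nat.prime_two⟩
  haveI := hA
  have hAc : ∀ a b : G, a ∈ A → b ∈ A → a * b = b * a := fun a b ha hb =>
    Subgroup.mul_comm_of_mem_isMulCommutative A ha hb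
  have htne : t ≠ 1 := by
    intro h; rw [h, orderOf_one] at ht; norm_num at ht
  have ht2 : t * t = 1 := by
    have h := pow_orderOf_eq_one t; rw [ht, pow_two] at h; exact h
  -- t is central
  have htc : ∀ g : G, g * t = t * g := by
    intro g
    have h1 : (g * t * g⁻¹) ^ 2 = 1 := by
      rw [conj_pow, pow_two, ht2, mul_one, mul_inv_cancel]
    have hne : g * t * g⁻¹ ≠ 1 := by
      intro h
      rw [mul_inv_eq_one] at h
      have h' : g * t = g * 1 := by rw [mul_one]; exact h
      exact htne (mul_left_cancel h')
    have heq := htu _ (orderOf_eq_prime h1 hne)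
    calc g * t = g * t * g⁻¹ * g := by rw [inv_mul_cancel_right]
      _ = t * g := by rw [heq]
  -- t belongs to A (double centralizer trick)
  have htA : t ∈ A := by
    set C := Subgroup.centralizer (A : Set G) with hC
    have hAC : A ≤ C := Subgroup.le_centralizer A
    set B := Subgroup.centralizer (C : Set G) with hB
    have hBC : B ≤ C := Subgroup.centralizer_le (SetLike.coe_subset_coe.mpr hAC)
    have hBcomm : IsMulCommutative B := by
      refine Subgroup.le_centralizer_iff_isMulCommutative.mp ?_
      exact le_trans (le_of_eq rfl) (Subgroup.centralizer_le (SetLike.coe_subset_coe.mpr hBC))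
    have hAB : A ≤ B := by
      intro a ha
      rw [Subgroup.mem_centralizer_iff]
      intro h hh
      exact ((Subgroup.mem_centralizer_iff.mp hh) a ha).symm
    have hBA := hmax B hBcomm hAB
    rw [← hBA]
    rw [Subgroup.mem_centralizer_iff]
    intro h _
    exact htc h
  obtain ⟨m, hm⟩ := IsPGroup.iff_orderOf.mp hG (x ^ 2)
  rcases m with _ | _ | m'
  · -- order of x² is 1, impossible
    have hx1 : x ^ 2 = 1 := orderOf_eq_one_iff.mp (by simpa using hm)
    have hxne1 : x ≠ 1 := by intro h; exact hx (h ▸ A.one_mem)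
    have := htu x (orderOf_eq_prime hx1 hxne1)
    exact ((hx (by rw [this]; exact htA)).elim)
  · -- order of x² is 2 : done
    exact htu _ (by simpa using hm)
  · -- order of x² is 2^(m'+2) ≥ 4 : contradiction
    exfalso
    have hordz : orderOf (x ^ 2) = 2 ^ (m' + 2) := hm
    have hzpow1 : (x ^ 2) ^ 2 ^ (m' + 2) = 1 := by
      rw [← hordz]; exact pow_orderOf_eq_one _
    have htz : (x ^ 2) ^ 2 ^ (m' + 1) = t := htu _ (ordsq (x ^ 2) (m' + 1) hordz)
    -- find c ∈ A with c * c = x ^ 2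
    have hcex : ∃ c, c ∈ A ∧ c * c = x ^ 2 := by
      by_contra hno
      push_neg at hno
      have hex : ∃ a, a ∈ A ∧ a ∉ Subgroup.zpowers (x ^ 2) := by
        by_contra h2
        push_neg at h2
        have hA_le : A ≤ Subgroup.zpowers x := fun a ha =>
          (Subgroup.zpowers_le.mpr (Subgroup.npow_mem_zpowers x 2)) (h2 a ha)
        have := hmax (Subgroup.zpowers x) (Subgroup.zpowers_isMulCommutative x) hA_le
        exact hx (this ▸ Subgroup.mem_zpowers x)
      set P : ℕ → Prop := fun n => ∃ a, a ∈ A ∧ a ∉ Subgroup.zpowers (x ^ 2) ∧ orderOf a = n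
        with hPdef
      have hPex : ∃ n, P n := by
        obtain ⟨a, ha, hz⟩ := hex; exact ⟨orderOf a, a, ha, hz, rfl⟩
      obtain ⟨a, haA, haz, hord⟩ := Nat.find_spec hPex
      have ha1 : a ≠ 1 := fun h => haz (h ▸ (Subgroup.zpowers (x ^ 2)).one_mem)
      obtain ⟨j, hj⟩ := IsPGroup.iff_orderOf.mp hG a
      have hj0 : j ≠ 0 := by
        intro h; rw [h, pow_zero] at hj; exact ha1 (orderOf_eq_one_iff.mp hj)
      obtain ⟨j', rfl⟩ : ∃ j', j = j' + 1 := ⟨j - 1, by omega⟩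
      have hasq : (a * a) ∈ Subgroup.zpowers (x ^ 2) := by
        by_contra hnot
        have haa : (a * a) ^ 2 ^ j' = 1 := by
          rw [← pow_two, ← pow_mul, ← pow_succ', ← hj]
          exact pow_orderOf_eq_one a
        have hle : orderOf (a * a) ≤ 2 ^ j' :=
          Nat.le_of_dvd (by positivity) (orderOf_dvd_of_pow_eq_one haa)
        have hlt : orderOf (a * a) < Nat.find hPex := by
          rw [← hord, hj]
          have : (2 : ℕ) ^ j' < 2 ^ (j' + 1) :=
            Nat.pow_lt_pow_right one_lt_two (Nat.lt_succ_self j')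
          omega
        exact Nat.find_min hPex hlt ⟨a * a, A.mul_mem haA haA, hnot, rfl⟩
      obtain ⟨k, hk⟩ := Subgroup.mem_zpowers_iff.mp hasq
      have hca : Commute a (x ^ 2) := hAc a (x ^ 2) haA hx2
      rcases Int.even_or_odd k with ⟨i, hi⟩ | ⟨i, hi⟩
      · -- even case : a ∈ zpowers (x²), contradiction
        have hcw : Commute ((x ^ 2) ^ i)⁻¹ a := ((hca.zpow_right i).inv_right).symm
        have hab : a * ((x ^ 2) ^ i)⁻¹ * (x ^ 2) ^ i = a := inv_mul_cancel_right a _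
        have hbb : (a * ((x ^ 2) ^ i)⁻¹) * (a * ((x ^ 2) ^ i)⁻¹) = 1 := by
          rw [hcw.mul_mul_mul_comm, ← hk, hi, zpow_add]
          group
        apply haz
        rcases eq_or_ne (a * ((x ^ 2) ^ i)⁻¹) 1 with hb1 | hb1
        · rw [← hab, hb1, one_mul]
          exact Subgroup.zpow_mem_zpowers _ i
        · have hbt : a * ((x ^ 2) ^ i)⁻¹ = t :=
            htu _ (orderOf_eq_prime (by rw [pow_two]; exact hbb) hb1)
          rw [← hab, hbt, ← htz]
          exact (Subgroup.zpowers (x ^ 2)).mul_mem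
            (Subgroup.npow_mem_zpowers _ _) (Subgroup.zpow_mem_zpowers _ i)
      · -- odd case : x² is a square in A, contradiction with hno
        have hco : IsCoprime k ((2 : ℤ) ^ (m' + 2)) := by
          rw [Int.isCoprime_iff_gcd_eq_one]
          have h1 : Odd k.natAbs := Int.natAbs_odd.mpr ⟨i, hi⟩
          have h3 : Nat.Coprime k.natAbs (2 ^ (m' + 2)) :=
            (Nat.coprime_two_right.mpr h1).pow_right _
          simpa [Int.gcd, Int.natAbs_pow] using h3
        obtain ⟨u, v, huv⟩ := hco
        refine hno (a ^ u) (A.zpow_mem haA u) ?_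
        have hku : k * u = 1 - v * (2 : ℤ) ^ (m' + 2) := by linear_combination huv
        have hz2 : a ^ (2 : ℤ) = a * a := by
          rw [show (2 : ℤ) = ((2 : ℕ) : ℤ) by norm_num, zpow_natCast, pow_two]
        have hzpz : (x ^ 2) ^ ((2 : ℤ) ^ (m' + 2)) = 1 := by
          rw [show ((2 : ℤ) ^ (m' + 2)) = ((2 ^ (m' + 2) : ℕ) : ℤ) by push_cast; ring,
            zpow_natCast]
          exact hzpow1
        calc a ^ u * a ^ u = a ^ (u + u) := (zpow_add a u u).symm
          _ = a ^ ((2 : ℤ) * u) := by rw [two_mul]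
          _ = (a ^ (2 : ℤ)) ^ u := zpow_mul a 2 u
          _ = ((x ^ 2) ^ k) ^ u := by rw [hz2, hk]
          _ = (x ^ 2) ^ (k * u) := (zpow_mul _ k u).symm
          _ = (x ^ 2) ^ ((1 : ℤ) - v * (2 : ℤ) ^ (m' + 2)) := by rw [hku]
          _ = (x ^ 2) ^ (1 : ℤ) * ((x ^ 2) ^ (v * (2 : ℤ) ^ (m' + 2)))⁻¹ := zpow_sub _ _ _
          _ = x ^ 2 * (((x ^ 2) ^ ((2 : ℤ) ^ (m' + 2))) ^ v)⁻¹ := by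
              rw [zpow_one, mul_comm v _, zpow_mul]
          _ = x ^ 2 := by rw [hzpz, one_zpow, inv_one, mul_one]
    obtain ⟨c, hcA, hc2⟩ := hcex
    set s := c⁻¹ * x with hs
    have hxcs : c * s = x := by rw [hs, mul_inv_cancel_left]
    have hsne1 : s ≠ 1 := by
      intro h; apply hx; rw [← hxcs, h, mul_one]; exact hcA
    have hsnet : s ≠ t := by
      intro h; apply hx; rw [← hxcs, h]; exact A.mul_mem hcA htA
    have key : s * c = c * s⁻¹ := by
      have hxx : c * (s * c * s) = c * c := by
        have h1 : (c * s) * (c * s) = c * c := by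
          rw [hxcs, ← pow_two]; exact hc2.symm
        calc c * (s * c * s) = (c * s) * (c * s) := by simp [mul_assoc]
          _ = c * c := h1
      have h2 : s * c * s = c := mul_left_cancel hxx
      rw [eq_mul_inv_iff_mul_eq]; exact h2
    have key2 : s⁻¹ * c = c * s := by
      have h1 : s⁻¹ * (s * c) * s = s⁻¹ * (c * s⁻¹) * s := by rw [key]
      have h2 : c * s = s⁻¹ * c := by
        calc c * s = s⁻¹ * (s * c) * s := by simp [mul_assoc]
          _ = s⁻¹ * (c * s⁻¹) * s := h1
          _ = s⁻¹ * c := by simp [mul_assoc]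
      exact h2.symm
    have hsz : Commute s (x ^ 2) := by
      show s * x ^ 2 = x ^ 2 * s
      rw [← hc2]
      calc s * (c * c) = (s * c) * c := (mul_assoc _ _ _).symm
        _ = (c * s⁻¹) * c := by rw [key]
        _ = c * (s⁻¹ * c) := mul_assoc _ _ _
        _ = c * (c * s) := by rw [key2]
        _ = (c * c) * s := (mul_assoc _ _ _).symm
    have conjs : c⁻¹ * s * c = s⁻¹ := by
      rw [mul_assoc, key, inv_mul_cancel_left]
    obtain ⟨j, hjj⟩ := IsPGroup.iff_orderOf.mp hG s
    have hj0 : j ≠ 0 := by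
      intro h; rw [h, pow_zero] at hjj; exact hsne1 (orderOf_eq_one_iff.mp hjj)
    have hj1 : j ≠ 1 := by
      intro h; rw [h, pow_one] at hjj; exact hsnet (htu _ hjj)
    obtain ⟨j', rfl⟩ : ∃ j', j = j' + 2 := ⟨j - 2, by omega⟩
    have hrt : s ^ 2 ^ (j' + 1) = t := htu _ (ordsq s (j' + 1) hjj)
    set r := s ^ 2 ^ j' with hrdef
    set q := (x ^ 2) ^ 2 ^ m' with hqdef
    have hr2 : r * r = t := by
      rw [hrdef, ← pow_add, ← hrt]
      congr 1
      omega
    have hq2 : q * q = t := by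
      rw [hqdef, ← pow_add, ← htz]
      congr 1
      omega
    have hCrq : Commute r q := hsz.pow_pow _ _
    have hCcz : Commute c (x ^ 2) := hAc c (x ^ 2) hcA hx2
    have hCcq : Commute c q := hCcz.pow_right _
    have hconjr : c⁻¹ * r * c = r⁻¹ := by
      calc c⁻¹ * r * c = c⁻¹ * s ^ 2 ^ j' * (c⁻¹)⁻¹ := by rw [inv_inv]
        _ = (c⁻¹ * s * (c⁻¹)⁻¹) ^ 2 ^ j' := conj_pow.symm
        _ = (s⁻¹) ^ 2 ^ j' := by rw [inv_inv, conjs]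
        _ = r⁻¹ := inv_pow s _
    have hrq2 : (r * q) * (r * q) = 1 := by
      rw [hCrq.symm.mul_mul_mul_comm, hr2, hq2, ht2]
    have hr_eq : r = q ∨ r = q⁻¹ := by
      rcases eq_or_ne (r * q) 1 with h | h
      · right; exact eq_inv_of_mul_eq_one_left h
      · left
        have ho : orderOf (r * q) = 2 :=
          orderOf_eq_prime (by rw [pow_two]; exact hrq2) h
        have hrqt : r * q = q * q := by rw [htu _ ho, ← hq2]
        exact mul_right_cancel hrqt
    have hCcr : Commute c r := by
      rcases hr_eq with h | h
      · rw [h]; exact hCcq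
      · rw [h]; exact hCcq.inv_right
    have h2 : r⁻¹ = r := by
      calc r⁻¹ = c⁻¹ * r * c := hconjr.symm
        _ = c⁻¹ * (c * r) := by rw [mul_assoc, ← hCcr.eq]
        _ = r := inv_mul_cancel_left _ _
    have : t = 1 := by
      calc t = r * r := hr2.symm
        _ = r⁻¹ * r := by rw [h2]
        _ = 1 := inv_mul_cancel r
    exact htne this
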